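/- If μ is convex on [0,1] and r-times differentiable at x_0 with μ^{(r)} continuous and positive on (x_0 - δ, x_0 + δ), and μ^{(k)}(x_0) = 0 for k = 2,...,r-1, then μ'(x_0 - δ/3) - μ'(x_0 - δ) ≥ c · μ^{(r)}(x_0) · δ^{r-1} for some constant c > 0 depending only on r. -/

import Mathlib

open Set

private lemma iDW_open {f : ℝ → ℝ} {s : Set ℝ} (n : ℕ) (hs : IsOpen s)
    {x : ℝ} (hx : x ∈ s) : iteratedDerivWithin n f s x = iteratedDeriv n f x := by
  simp only [iteratedDerivWithin, iteratedDeriv, iteratedFDerivWithin_of_isOpen n hs hx]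

private lemma convex_deriv_mono {S : Set ℝ} {f : ℝ → ℝ} {x y : ℝ} (hfc : ConvexOn ℝ S f)
    (hx : x ∈ S) (hy : y ∈ S) (hxy : x < y)
    (hdx : DifferentiableAt ℝ f x) (hdy : DifferentiableAt ℝ f y) :
    deriv f x ≤ deriv f y :=
  (hfc.deriv_le_slope hx hy hxy hdx).trans (hfc.slope_le_deriv hx hy hxy hdy)

theorem stmt_10 (r : ℕ) (hr : 2 ≤ r) :
    ∃ c > (0 : ℝ), ∀ (μ : ℝ → ℝ) (x0 δ : ℝ), 0 < δ → 0 < x0 - δ → x0 + δ < 1 →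
      ConvexOn ℝ (Set.Icc (0 : ℝ) 1) μ →
      ContDiffOn ℝ r μ (Set.Ioo (x0 - δ) (x0 + δ)) →
      DifferentiableAt ℝ μ (x0 - δ) →
      (∀ k, 2 ≤ k → k ≤ r - 1 → iteratedDeriv k μ x0 = 0) →
      0 < iteratedDeriv r μ x0 →
      (∀ t ∈ Set.Ioo (x0 - δ) (x0 + δ), iteratedDeriv r μ x0 / 2 < iteratedDeriv r μ t) →
      c * iteratedDeriv r μ x0 * δ ^ (r - 1) ≤ deriv μ (x0 - δ / 3) - deriv μ (x0 - δ) := by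
  refine ⟨1 / (2 * 3 ^ (r - 1) * ((r - 2).factorial : ℝ)), by positivity, ?_⟩
  intro μ x0 δ hδ h0 h1 hconv hsmooth hdiffa hvanish hM hlow
  set M := iteratedDeriv r μ x0 with hMdef
  set I := Set.Ioo (x0 - δ) (x0 + δ) with hIdef
  have hIopen : IsOpen I := isOpen_Ioo
  have hIuniq : UniqueDiffOn ℝ I := hIopen.uniqueDiffOn
  have hfm : ∀ m : ℕ, (0:ℝ) < (m.factorial : ℝ) := fun m => Nat.cast_pos.mpr m.factorial_pos
  have hdiffj : ∀ j : ℕ, j < r → DifferentiableOn ℝ (iteratedDeriv j μ) I := by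
    intro j hj
    have h := hsmooth.differentiableOn_iteratedDerivWithin (by exact_mod_cast hj) hIuniq
    exact h.congr fun x hx => (iDW_open j hIopen hx).symm
  have hHD : ∀ j : ℕ, j < r → ∀ t ∈ I, HasDerivAt (iteratedDeriv j μ)
      (iteratedDeriv (j + 1) μ t) t := by
    intro j hj t ht
    have h := ((hdiffj j hj t ht).differentiableAt (hIopen.mem_nhds ht)).hasDerivAt
    rwa [← iteratedDeriv_succ] at h
  have hD1 : ∀ t ∈ I, HasDerivAt (deriv μ) (iteratedDeriv 2 μ t) t := by
    intro t ht
    have h := hHD 1 (by omega) t ht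
    rwa [iteratedDeriv_one] at h
  have hdiffμ : DifferentiableOn ℝ μ I := by
    have h := hdiffj 0 (by omega)
    rwa [iteratedDeriv_zero] at h
  -- the key induction
  have key : ∀ m : ℕ, m ≤ r - 2 → ∀ x ∈ Set.Ioc (x0 - δ) x0,
      M / 2 * (x0 - x) ^ m / (m.factorial : ℝ) ≤ (-1 : ℝ) ^ m * iteratedDeriv (r - m) μ x := by
    intro m
    induction m with
    | zero =>
      intro _ x hx
      have hxI : x ∈ I := ⟨hx.1, lt_of_le_of_lt hx.2 (by linarith)⟩
      have h := hlow x hxI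
      simp only [pow_zero, Nat.factorial_zero, Nat.cast_one, mul_one, div_one, one_mul,
        Nat.sub_zero]
      linarith
    | succ m ih =>
      intro hm x hx
      have hm' : m ≤ r - 2 := by omega
      have hj1 : r - (m + 1) + 1 = r - m := by omega
      have hjlt : r - (m + 1) < r := by omega
      have hx0 : iteratedDeriv (r - (m + 1)) μ x0 = 0 := hvanish _ (by omega) (by omega)
      have hGderiv : ∀ t ∈ Set.Ioc (x0 - δ) x0, HasDerivAt
          (fun t => (-1 : ℝ) ^ (m + 1) * iteratedDeriv (r - (m + 1)) μ t
            - M / 2 / (((m + 1).factorial : ℕ) : ℝ) * (x0 - t) ^ (m + 1))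
          ((-1 : ℝ) ^ (m + 1) * iteratedDeriv (r - (m + 1) + 1) μ t
            - M / 2 / (((m + 1).factorial : ℕ) : ℝ) * (((m : ℝ) + 1) * (x0 - t) ^ m * (-1))) t := by
        intro t ht
        have htI : t ∈ I := ⟨ht.1, lt_of_le_of_lt ht.2 (by linarith)⟩
        have h1 := (hHD _ hjlt t htI).const_mul ((-1 : ℝ) ^ (m + 1))
        have h2 : HasDerivAt (fun t : ℝ => (x0 - t) ^ (m + 1))
            (((m : ℝ) + 1) * (x0 - t) ^ m * (-1)) t := by
          have h := ((hasDerivAt_id t).const_sub x0).pow (m + 1)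
          simpa [Pi.pow_def] using h
        exact h1.sub (h2.const_mul _)
      have hsub : Set.Icc x x0 ⊆ Set.Ioc (x0 - δ) x0 :=
        fun t ht => ⟨lt_of_lt_of_le hx.1 ht.1, ht.2⟩
      have hGanti : AntitoneOn
          (fun t => (-1 : ℝ) ^ (m + 1) * iteratedDeriv (r - (m + 1)) μ t
            - M / 2 / (((m + 1).factorial : ℕ) : ℝ) * (x0 - t) ^ (m + 1)) (Set.Icc x x0) := by
        apply antitoneOn_of_deriv_nonpos (convex_Icc x x0)
        · intro t ht
          exact (hGderiv t (hsub ht)).continuousAt.continuousWithinAt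
        · intro t ht
          rw [interior_Icc] at ht
          exact ((hGderiv t (hsub (Ioo_subset_Icc_self ht))).differentiableAt).differentiableWithinAt
        · intro t ht
          rw [interior_Icc] at ht
          have ht' : t ∈ Set.Ioc (x0 - δ) x0 := hsub (Ioo_subset_Icc_self ht)
          rw [(hGderiv t ht').deriv]
          have hih := ih hm' t ht'
          have e1 : (-1 : ℝ) ^ (m + 1) * iteratedDeriv (r - (m + 1) + 1) μ t
              = -((-1 : ℝ) ^ m * iteratedDeriv (r - m) μ t) := by
            rw [hj1]; ring
          have e2 : M / 2 / (((m + 1).factorial : ℕ) : ℝ) * (((m : ℝ) + 1) * (x0 - t) ^ m * (-1))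
              = -(M / 2 * (x0 - t) ^ m / (m.factorial : ℝ)) := by
            rw [Nat.factorial_succ]
            have h1 := (hfm m).ne'
            push_cast
            field_simp
          rw [e1, e2]
          linarith
      have hmem1 : x ∈ Set.Icc x x0 := Set.left_mem_Icc.mpr hx.2
      have hmem2 : x0 ∈ Set.Icc x x0 := Set.right_mem_Icc.mpr hx.2
      have hGA := hGanti hmem1 hmem2 hx.2
      simp only [hx0, mul_zero, sub_self] at hGA
      -- hGA : G x0 ≤ G x with G x0 = 0
      have hzero : ((0:ℝ)) ^ (m+1) = 0 := zero_pow m.succ_ne_zero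
      rw [hzero] at hGA
      have e3 : M / 2 * (x0 - x) ^ (m + 1) / (((m + 1).factorial : ℕ) : ℝ)
          = M / 2 / (((m + 1).factorial : ℕ) : ℝ) * (x0 - x) ^ (m + 1) := by ring
      rw [e3]
      linarith
  -- split on parity of r
  rcases Nat.even_or_odd r with hre | hro
  · -- r even : the real case
    obtain ⟨k, hk⟩ := hre
    have hk1 : 1 ≤ k := by omega
    have hs2 : (-1 : ℝ) ^ (r - 2) = 1 := Even.neg_one_pow ⟨k - 1, by omega⟩
    have hkey2 : ∀ x ∈ Set.Ioc (x0 - δ) x0,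
        M / 2 * (x0 - x) ^ (r - 2) / (((r - 2).factorial : ℕ) : ℝ) ≤ iteratedDeriv 2 μ x := by
      intro x hx
      have h := key (r - 2) le_rfl x hx
      rwa [hs2, one_mul, show r - (r - 2) = 2 by omega] at h
    set K := M / 2 * (δ / 3) ^ (r - 2) / (((r - 2).factorial : ℕ) : ℝ) with hK
    have hKd : ∀ t ∈ I, HasDerivAt (fun t => deriv μ t - K * t)
        (iteratedDeriv 2 μ t - K) t := by
      intro t ht
      have h := (hD1 t ht).sub ((hasDerivAt_id t).const_mul K)
      simpa [Pi.sub_def] using h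
    have hIsub : Set.Icc (x0 - 2 * δ / 3) (x0 - δ / 3) ⊆ I := by
      intro t ht
      exact ⟨by linarith [ht.1], by linarith [ht.2]⟩
    have hmono : MonotoneOn (fun t => deriv μ t - K * t)
        (Set.Icc (x0 - 2 * δ / 3) (x0 - δ / 3)) := by
      apply monotoneOn_of_deriv_nonneg (convex_Icc _ _)
      · intro t ht
        exact (hKd t (hIsub ht)).continuousAt.continuousWithinAt
      · intro t ht
        rw [interior_Icc] at ht
        exact ((hKd t (hIsub (Ioo_subset_Icc_self ht))).differentiableAt).differentiableWithinAt
      · intro t ht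
        rw [interior_Icc] at ht
        have htI : t ∈ I := hIsub (Ioo_subset_Icc_self ht)
        rw [(hKd t htI).deriv]
        have h2 := hkey2 t ⟨by linarith [ht.1], by linarith [ht.2]⟩
        have hple : (δ / 3) ^ (r - 2) ≤ (x0 - t) ^ (r - 2) :=
          pow_le_pow_left₀ (by positivity) (by linarith [ht.2]) _
        have hKle : K ≤ M / 2 * (x0 - t) ^ (r - 2) / (((r - 2).factorial : ℕ) : ℝ) := by
          rw [hK]
          have h3 := mul_le_mul_of_nonneg_left hple (by linarith : (0:ℝ) ≤ M / 2)
          exact (div_le_div_iff_of_pos_right (hfm (r - 2))).mpr h3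
        linarith
    have hBe := hmono (Set.left_mem_Icc.mpr (by linarith)) (Set.right_mem_Icc.mpr (by linarith))
      (by linarith : x0 - 2 * δ / 3 ≤ x0 - δ / 3)
    -- convexity step: deriv μ (x0 - δ) ≤ deriv μ (x0 - 2δ/3)
    have hdb : DifferentiableAt ℝ μ (x0 - 2 * δ / 3) :=
      (hdiffμ _ (⟨by linarith, by linarith⟩ : x0 - 2 * δ / 3 ∈ I)).differentiableAt
        (hIopen.mem_nhds ⟨by linarith, by linarith⟩)
    have hconvstep : deriv μ (x0 - δ) ≤ deriv μ (x0 - 2 * δ / 3) :=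
      convex_deriv_mono hconv ⟨by linarith, by linarith⟩ ⟨by linarith, by linarith⟩
        (by linarith) hdiffa hdb
    have hfinal : K * (δ / 3) ≤ deriv μ (x0 - δ / 3) - deriv μ (x0 - δ) := by
      have h' : K * (x0 - δ / 3) - K * (x0 - 2 * δ / 3) = K * (δ / 3) := by ring
      simp only at hBe
      linarith
    have hgoalEq : 1 / (2 * 3 ^ (r - 1) * (((r - 2).factorial : ℕ) : ℝ)) * M * δ ^ (r - 1)
        = K * (δ / 3) := by
      have e1 : ((δ : ℝ) / 3) ^ (r - 2) = δ ^ (r - 2) / 3 ^ (r - 2) := div_pow δ 3 (r - 2)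
      rw [hK, e1, show r - 1 = r - 2 + 1 from by omega, pow_succ, pow_succ]
      have hf := (hfm (r - 2)).ne'
      field_simp
    rw [hgoalEq]
    exact hfinal
  · -- r odd : hypotheses are contradictory
    obtain ⟨k, hk⟩ := hro
    have hk1 : 1 ≤ k := by omega
    have hs2 : (-1 : ℝ) ^ (r - 2) = -1 := Odd.neg_one_pow ⟨k - 1, by omega⟩
    have hkey2 : ∀ x ∈ Set.Ioc (x0 - δ) x0,
        M / 2 * (x0 - x) ^ (r - 2) / (((r - 2).factorial : ℕ) : ℝ)
          ≤ -(iteratedDeriv 2 μ x) := by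
      intro x hx
      have h := key (r - 2) le_rfl x hx
      rw [hs2, show r - (r - 2) = 2 by omega] at h
      linarith
    have hIsub : Set.Icc (x0 - δ / 2) (x0 - δ / 4) ⊆ I := by
      intro t ht
      exact ⟨by linarith [ht.1], by linarith [ht.2]⟩
    have hanti : StrictAntiOn (deriv μ) (Set.Icc (x0 - δ / 2) (x0 - δ / 4)) := by
      apply strictAntiOn_of_deriv_neg (convex_Icc _ _)
      · intro t ht
        exact (hD1 t (hIsub ht)).continuousAt.continuousWithinAt
      · intro t ht
        rw [interior_Icc] at ht
        have htI : t ∈ I := hIsub (Ioo_subset_Icc_self ht)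
        rw [(hD1 t htI).deriv]
        have h2 := hkey2 t ⟨by linarith [ht.1], by linarith [ht.2]⟩
        have hpos : 0 < M / 2 * (x0 - t) ^ (r - 2) / (((r - 2).factorial : ℕ) : ℝ) := by
          have hxt : (0:ℝ) < x0 - t := by linarith [ht.2]
          exact div_pos (mul_pos (by linarith) (pow_pos hxt _)) (hfm (r - 2))
        linarith
    have hab : deriv μ (x0 - δ / 4) < deriv μ (x0 - δ / 2) :=
      hanti (Set.left_mem_Icc.mpr (by linarith)) (Set.right_mem_Icc.mpr (by linarith))
        (by linarith)
    have hd1 : DifferentiableAt ℝ μ (x0 - δ / 2) :=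
      (hdiffμ _ (⟨by linarith, by linarith⟩ : x0 - δ / 2 ∈ I)).differentiableAt
        (hIopen.mem_nhds ⟨by linarith, by linarith⟩)
    have hd2 : DifferentiableAt ℝ μ (x0 - δ / 4) :=
      (hdiffμ _ (⟨by linarith, by linarith⟩ : x0 - δ / 4 ∈ I)).differentiableAt
        (hIopen.mem_nhds ⟨by linarith, by linarith⟩)
    have hmono2 : deriv μ (x0 - δ / 2) ≤ deriv μ (x0 - δ / 4) :=
      convex_deriv_mono hconv ⟨by linarith, by linarith⟩ ⟨by linarith, by linarith⟩
        (by linarith) hd1 hd2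
    linarith
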